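/- Let H₁, H₂ be Hopf algebras with invertible antipodes S₁, S₂, and let M be an (α₁,β₁,γ₁,δ₁)- and N an (α₂,β₂,γ₂,δ₂)-Yetter-Drinfeld-Long bimodule. Define c(m ⊗ n) = β₁⁻¹(m₍₋₁₎) ▷ n₍₀₎ ⊗ m₍₀₎ ◁ δ₁⁻¹(n₍₁₎) and c'(n ⊗ m) = m₍₀₎ ◁ δ₁⁻¹(S₂⁻¹(n₍₁₎)) ⊗ β₁⁻¹(S₁⁻¹(m₍₋₁₎)) ▷ n₍₀₎. Then c' ∘ c = id_{M⊗N} and c ∘ c' = id_{N⊗M} (viewing the second factor with the twisted module structure as in the construction). -/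

import Mathlib

open TensorProduct

/-- The structure maps of an `H₁`-`H₂`-bimodule-bicomodule: left `H₁`-action,
right `H₂`-action, left `H₁`-coaction and right `H₂`-coaction. -/
structure YDLStruct (k H₁ H₂ M : Type*) [Field k] [Ring H₁] [Ring H₂]
    [HopfAlgebra k H₁] [HopfAlgebra k H₂] [AddCommGroup M] [Module k M] where
  actL : H₁ ⊗[k] M →ₗ[k] M
  actR : M ⊗[k] H₂ →ₗ[k] M
  coL : M →ₗ[k] H₁ ⊗[k] M
  coR : M →ₗ[k] M ⊗[k] H₂

variable {k H₁ H₂ : Type*} [Field k] [Ring H₁] [Ring H₂]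
  [HopfAlgebra k H₁] [HopfAlgebra k H₂]

/-- `(h ⊗ m) ⊗ h' ↦ (h * h') ⊗ m`. -/
noncomputable def rmulL (k H M : Type*) [Field k] [Ring H] [HopfAlgebra k H]
    [AddCommGroup M] [Module k M] : (H ⊗[k] M) ⊗[k] H →ₗ[k] H ⊗[k] M :=
  TensorProduct.map (LinearMap.mul' k H) LinearMap.id ∘ₗ
    (TensorProduct.assoc k H H M).symm.toLinearMap ∘ₗ
    TensorProduct.map LinearMap.id (TensorProduct.comm k M H).toLinearMap ∘ₗ
    (TensorProduct.assoc k H M H).toLinearMap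

/-- `h ⊗ (m ⊗ h') ↦ m ⊗ (h * h')`. -/
noncomputable def lmulR (k H M : Type*) [Field k] [Ring H] [HopfAlgebra k H]
    [AddCommGroup M] [Module k M] : H ⊗[k] (M ⊗[k] H) →ₗ[k] M ⊗[k] H :=
  TensorProduct.map LinearMap.id (LinearMap.mul' k H) ∘ₗ
    (TensorProduct.assoc k M H H).toLinearMap ∘ₗ
    TensorProduct.map (TensorProduct.comm k H M).toLinearMap LinearMap.id ∘ₗ
    (TensorProduct.assoc k H M H).symm.toLinearMap

/-- `M` with structure maps `S` is an `(α, β, γ, δ)`-Yetter-Drinfeld-Long bimodule: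
it is an `H₁`-`H₂`-bimodule and `H₁`-`H₂`-bicomodule satisfying the four compatibility
conditions (2.1)–(2.4) (in Sweedler notation:
(2.1) `α(h₁)m₍₋₁₎ ⊗ h₂ ▷ m₍₀₎ = (h₁ ▷ m)₍₋₁₎ β(h₂) ⊗ (h₁ ▷ m)₍₀₎`;
(2.2) `(h ▷ m)₍₀₎ ⊗ (h ▷ m)₍₁₎ = h ▷ m₍₀₎ ⊗ m₍₁₎`;
(2.3) `m₍₀₎ ◁ h₁ ⊗ m₍₁₎ δ(h₂) = (m ◁ h₂)₍₀₎ ⊗ γ(h₁)(m ◁ h₂)₍₁₎`;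
(2.4) `(m ◁ h)₍₋₁₎ ⊗ (m ◁ h)₍₀₎ = m₍₋₁₎ ⊗ m₍₀₎ ◁ h`). -/
structure IsYDL (al be : H₁ →ₗ[k] H₁) (ga de : H₂ →ₗ[k] H₂)
    {M : Type*} [AddCommGroup M] [Module k M] (S : YDLStruct k H₁ H₂ M) : Prop where
  actL_one : ∀ m : M, S.actL (1 ⊗ₜ[k] m) = m
  actL_mul : ∀ (h h' : H₁) (m : M),
    S.actL ((h * h') ⊗ₜ[k] m) = S.actL (h ⊗ₜ[k] S.actL (h' ⊗ₜ[k] m))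
  actR_one : ∀ m : M, S.actR (m ⊗ₜ[k] 1) = m
  actR_mul : ∀ (m : M) (h h' : H₂),
    S.actR (S.actR (m ⊗ₜ[k] h) ⊗ₜ[k] h') = S.actR (m ⊗ₜ[k] (h * h'))
  act_bimod : ∀ (h : H₁) (m : M) (h'' : H₂),
    S.actR (S.actL (h ⊗ₜ[k] m) ⊗ₜ[k] h'') = S.actL (h ⊗ₜ[k] S.actR (m ⊗ₜ[k] h''))
  coL_counit : ∀ m : M,
    TensorProduct.lid k M (TensorProduct.map Coalgebra.counit LinearMap.id (S.coL m)) = m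
  coL_coassoc : ∀ m : M,
    TensorProduct.map Coalgebra.comul LinearMap.id (S.coL m) =
      (TensorProduct.assoc k H₁ H₁ M).symm
        (TensorProduct.map LinearMap.id S.coL (S.coL m))
  coR_counit : ∀ m : M,
    TensorProduct.rid k M (TensorProduct.map LinearMap.id Coalgebra.counit (S.coR m)) = m
  coR_coassoc : ∀ m : M,
    TensorProduct.map LinearMap.id Coalgebra.comul (S.coR m) =
      TensorProduct.assoc k M H₂ H₂
        (TensorProduct.map S.coR LinearMap.id (S.coR m))
  co_bicomod : ∀ m : M,
    TensorProduct.map LinearMap.id S.coR (S.coL m) =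
      TensorProduct.assoc k H₁ M H₂
        (TensorProduct.map S.coL LinearMap.id (S.coR m))
  ydL : ∀ (h : H₁) (m : M),
    TensorProduct.map (LinearMap.mul' k H₁ ∘ₗ TensorProduct.map al LinearMap.id) S.actL
      (TensorProduct.tensorTensorTensorComm k H₁ H₁ H₁ M
        (Coalgebra.comul (R := k) h ⊗ₜ[k] S.coL m)) =
    rmulL k H₁ M
      (TensorProduct.map (S.coL ∘ₗ S.actL ∘ₗ (TensorProduct.mk k H₁ M).flip m) be
        (Coalgebra.comul (R := k) h))
  longL : ∀ (h : H₁) (m : M),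
    S.coR (S.actL (h ⊗ₜ[k] m)) =
      TensorProduct.map (S.actL ∘ₗ TensorProduct.mk k H₁ M h) LinearMap.id (S.coR m)
  ydR : ∀ (m : M) (h : H₂),
    TensorProduct.map S.actR (LinearMap.mul' k H₂ ∘ₗ TensorProduct.map LinearMap.id de)
      (TensorProduct.tensorTensorTensorComm k M H₂ H₂ H₂
        (S.coR m ⊗ₜ[k] Coalgebra.comul (R := k) h)) =
    lmulR k H₂ M
      (TensorProduct.map ga (S.coR ∘ₗ S.actR ∘ₗ TensorProduct.mk k M H₂ m)
        (Coalgebra.comul (R := k) h))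
  longR : ∀ (m : M) (h : H₂),
    S.coL (S.actR (m ⊗ₜ[k] h)) =
      TensorProduct.map LinearMap.id (S.actR ∘ₗ (TensorProduct.mk k M H₂).flip h)
        (S.coL m)

/-- The braiding `c_{M,N}(m ⊗ n) = β₁⁻¹(m₍₋₁₎) ▷ n₍₀₎ ⊗ m₍₀₎ ◁ δ₁⁻¹(n₍₁₎)`, where
`bInv` and `dInv` are the maps `β₁⁻¹` and `δ₁⁻¹`. -/
noncomputable def braid {M N : Type*} [AddCommGroup M] [Module k M]
    [AddCommGroup N] [Module k N]
    (bInv : H₁ →ₗ[k] H₁) (dInv : H₂ →ₗ[k] H₂)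
    (SM : YDLStruct k H₁ H₂ M) (SN : YDLStruct k H₁ H₂ N) :
    M ⊗[k] N →ₗ[k] N ⊗[k] M :=
  TensorProduct.map (SN.actL ∘ₗ TensorProduct.map bInv LinearMap.id)
      (SM.actR ∘ₗ TensorProduct.map LinearMap.id dInv) ∘ₗ
    (TensorProduct.tensorTensorTensorComm k H₁ M N H₂).toLinearMap ∘ₗ
    TensorProduct.map SM.coL SN.coR

/-- The tensor product structure maps on `M ⊗ N`: here `u = α₂`, `v = α₂β₁α₂⁻¹`,
`w = γ₂`, `x = γ₂⁻¹δ₁γ₂`, so that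
`h ▷ (m⊗n) = h₁▷m ⊗ h₂▷n`, `(m⊗n)₍₋₁₎ ⊗ (m⊗n)₍₀₎ = u(m₍₋₁₎)v(n₍₋₁₎) ⊗ m₍₀₎⊗n₍₀₎`,
`(m⊗n)◁h = m◁w(h₁) ⊗ n◁x(h₂)`, `(m⊗n)₍₀₎ ⊗ (m⊗n)₍₁₎ = m₍₀₎⊗n₍₀₎ ⊗ m₍₁₎n₍₁₎`. -/
noncomputable def tensorYDL {M N : Type*} [AddCommGroup M] [Module k M]
    [AddCommGroup N] [Module k N]
    (u v : H₁ →ₗ[k] H₁) (w x : H₂ →ₗ[k] H₂)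
    (SM : YDLStruct k H₁ H₂ M) (SN : YDLStruct k H₁ H₂ N) :
    YDLStruct k H₁ H₂ (M ⊗[k] N) where
  actL := TensorProduct.map SM.actL SN.actL ∘ₗ
    (TensorProduct.tensorTensorTensorComm k H₁ H₁ M N).toLinearMap ∘ₗ
    TensorProduct.map Coalgebra.comul LinearMap.id
  actR := TensorProduct.map SM.actR SN.actR ∘ₗ
    (TensorProduct.tensorTensorTensorComm k M N H₂ H₂).toLinearMap ∘ₗ
    TensorProduct.map LinearMap.id
      (TensorProduct.map w x ∘ₗ (Coalgebra.comul : H₂ →ₗ[k] H₂ ⊗[k] H₂))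
  coL := TensorProduct.map (LinearMap.mul' k H₁ ∘ₗ TensorProduct.map u v) LinearMap.id ∘ₗ
    (TensorProduct.tensorTensorTensorComm k H₁ M H₁ N).toLinearMap ∘ₗ
    TensorProduct.map SM.coL SN.coL
  coR := TensorProduct.map LinearMap.id (LinearMap.mul' k H₂) ∘ₗ
    (TensorProduct.tensorTensorTensorComm k M H₂ N H₂).toLinearMap ∘ₗ
    TensorProduct.map SM.coR SN.coR

/-- The twisted structure on `N`: `u = β₁⁻¹α₁`, `v = α₁⁻¹α₂β₁α₂⁻¹`,
`w = γ₂⁻¹δ₁γ₂γ₁⁻¹`, `x = γ₁δ₁⁻¹`, so that `h ⇀ n = u(h) ▷ n`,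
`n ↦ v(n₍₋₁₎) ⊗ n₍₀₎`, `n ↼ h = n ◁ w(h)`, `n ↦ n₍₀₎ ⊗ x(n₍₁₎)`. -/
noncomputable def twistYDL {N : Type*} [AddCommGroup N] [Module k N]
    (u v : H₁ →ₗ[k] H₁) (w x : H₂ →ₗ[k] H₂) (SN : YDLStruct k H₁ H₂ N) :
    YDLStruct k H₁ H₂ N where
  actL := SN.actL ∘ₗ TensorProduct.map u LinearMap.id
  actR := SN.actR ∘ₗ TensorProduct.map LinearMap.id w
  coL := TensorProduct.map v LinearMap.id ∘ₗ SN.coL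
  coR := TensorProduct.map LinearMap.id x ∘ₗ SN.coR

/-- The map `c'(n ⊗ m) = m₍₀₎ ◁ dInvS(n₍₁₎) ⊗ bInvS(m₍₋₁₎) ▷ n₍₀₎`, where
`bInvS = β₁⁻¹S₁⁻¹` and `dInvS = δ₁⁻¹S₂⁻¹`. -/
noncomputable def braidInv {k H₁ H₂ : Type*} [Field k] [Ring H₁] [Ring H₂]
    [HopfAlgebra k H₁] [HopfAlgebra k H₂]
    {M N : Type*} [AddCommGroup M] [Module k M] [AddCommGroup N] [Module k N]
    (bInvS : H₁ →ₗ[k] H₁) (dInvS : H₂ →ₗ[k] H₂)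
    (SM : YDLStruct k H₁ H₂ M) (SN : YDLStruct k H₁ H₂ N) :
    N ⊗[k] M →ₗ[k] M ⊗[k] N :=
  TensorProduct.map
      (SM.actR ∘ₗ TensorProduct.map LinearMap.id dInvS ∘ₗ
        (TensorProduct.comm k H₂ M).toLinearMap)
      (SN.actL ∘ₗ TensorProduct.map bInvS LinearMap.id ∘ₗ
        (TensorProduct.comm k N H₁).toLinearMap) ∘ₗ
    (TensorProduct.comm k (N ⊗[k] H₁) (H₂ ⊗[k] M)).toLinearMap ∘ₗ
    (TensorProduct.tensorTensorTensorComm k N H₂ H₁ M).toLinearMap ∘ₗ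
    TensorProduct.map SN.coR SM.coL


section AuxHopf
set_option synthInstance.maxHeartbeats 1000000
set_option maxHeartbeats 1000000
open Coalgebra HopfAlgebra

section ReprLemmas
variable {k C : Type*} [Field k] [AddCommGroup C] [Module k C] [Coalgebra k C]

lemma repr_counit_right {a : C} {ι : Type*} (ra : Coalgebra.Repr k a ι) :
    ∑ i ∈ ra.index, counit (R := k) (ra.right i) • ra.left i = a := by
  have h := sum_tmul_counit_eq ra
  calc ∑ i ∈ ra.index, counit (R := k) (ra.right i) • ra.left i
      = TensorProduct.rid k C
          (∑ i ∈ ra.index, ra.left i ⊗ₜ[k] counit (R := k) (ra.right i)) := by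
        rw [map_sum]; simp
    _ = a := by rw [h]; simp

lemma repr_counit_left {a : C} {ι : Type*} (ra : Coalgebra.Repr k a ι) :
    ∑ i ∈ ra.index, counit (R := k) (ra.left i) • ra.right i = a := by
  have h := sum_counit_tmul_eq ra
  calc ∑ i ∈ ra.index, counit (R := k) (ra.left i) • ra.right i
      = TensorProduct.lid k C
          (∑ i ∈ ra.index, counit (R := k) (ra.left i) ⊗ₜ[k] ra.right i) := by
        rw [map_sum]; simp
    _ = a := by rw [h]; simp

end ReprLemmas

section Anti

variable {k H : Type*} [Field k] [Ring H] [HopfAlgebra k H]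

lemma my_antipode_one : antipode (R := k) (1 : H) = 1 := by
  have := mul_antipode_rTensor_comul_apply (R := k) (A := H) 1
  simpa [Algebra.TensorProduct.one_def] using this

/-- `W₂ ((p⊗q)⊗(r⊗s)) = (p*r) * (S s * S q)`. -/
noncomputable def W₂aux (k H : Type*) [Field k] [Ring H] [HopfAlgebra k H] :
    (H ⊗[k] H) ⊗[k] (H ⊗[k] H) →ₗ[k] H :=
  LinearMap.mul' k H ∘ₗ
    TensorProduct.map (LinearMap.mul' k H)
      (LinearMap.mul' k H ∘ₗ TensorProduct.map (antipode (R := k)) (antipode (R := k)) ∘ₗ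
        (TensorProduct.comm k H H).toLinearMap) ∘ₗ
    (TensorProduct.tensorTensorTensorComm k H H H H).toLinearMap

lemma W₂aux_tmul (p q r s : H) :
    W₂aux k H ((p ⊗ₜ[k] q) ⊗ₜ[k] (r ⊗ₜ[k] s)) =
      (p * r) * (antipode (R := k) s * antipode (R := k) q) := by
  simp [W₂aux]


lemma W₂aux_comul (a b : H) :
    W₂aux k H (comul (R := k) a ⊗ₜ[k] comul (R := k) b) =
      (counit (R := k) a * counit (R := k) b) • (1 : H) := by
  have claim2 : ∀ (p q : H) (z : H ⊗[k] H),
      W₂aux k H ((p ⊗ₜ[k] q) ⊗ₜ[k] z) =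
        p * LinearMap.mul' k H ((antipode (R := k)).lTensor H z) * antipode (R := k) q := by
    intro p q z
    induction z using TensorProduct.induction_on with
    | zero => simp
    | tmul r s => simp [W₂aux_tmul, mul_assoc]
    | add x y hx hy => simp [tmul_add, hx, hy, mul_add, add_mul]
  have claim1 : ∀ (x : H ⊗[k] H) (b : H),
      W₂aux k H (x ⊗ₜ[k] comul (R := k) b) =
        counit (R := k) b • LinearMap.mul' k H ((antipode (R := k)).lTensor H x) := by
    intro x b
    induction x using TensorProduct.induction_on with
    | zero => simp
    | tmul p q =>
        rw [claim2]
        simp [mul_antipode_lTensor_comul_apply, Algebra.algebraMap_eq_smul_one, mul_smul_comm,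
          smul_mul_assoc]
    | add x y hx hy => simp [add_tmul, hx, hy, smul_add]
  rw [claim1]
  rw [mul_antipode_lTensor_comul_apply, Algebra.algebraMap_eq_smul_one, smul_smul,
    mul_comm (counit (R := k) b)]

/-- `Ψ (X ⊗ Y) = "S(x₁y₁) * (x₂y₂)"`. -/
noncomputable def Ψaux (k H : Type*) [Field k] [Ring H] [HopfAlgebra k H] :
    (H ⊗[k] H) ⊗[k] (H ⊗[k] H) →ₗ[k] H :=
  LinearMap.mul' k H ∘ₗ (antipode (R := k)).rTensor H ∘ₗ
    TensorProduct.map (LinearMap.mul' k H) (LinearMap.mul' k H) ∘ₗ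
    (TensorProduct.tensorTensorTensorComm k H H H H).toLinearMap

lemma Ψaux_comul (u v : H) :
    Ψaux k H (comul (R := k) u ⊗ₜ[k] comul (R := k) v) =
      (counit (R := k) u * counit (R := k) v) • (1 : H) := by
  have claim5 : ∀ X Y : H ⊗[k] H,
      TensorProduct.map (LinearMap.mul' k H) (LinearMap.mul' k H)
        (TensorProduct.tensorTensorTensorComm k H H H H (X ⊗ₜ[k] Y)) = X * Y := by
    intro X Y
    induction X using TensorProduct.induction_on with
    | zero => simp
    | tmul p q =>
        induction Y using TensorProduct.induction_on with
        | zero => simp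
        | tmul r s => simp [Algebra.TensorProduct.tmul_mul_tmul]
        | add x y hx hy => simp [tmul_add, hx, hy, mul_add]
    | add x y hx hy => simp [add_tmul, hx, hy, add_mul]
  have : Ψaux k H (comul (R := k) u ⊗ₜ[k] comul (R := k) v) =
      LinearMap.mul' k H ((antipode (R := k)).rTensor H (comul (R := k) (u * v))) := by
    rw [Bialgebra.comul_mul, ← claim5]
    simp [Ψaux]
  rw [this, mul_antipode_rTensor_comul_apply, Bialgebra.counit_mul,
    Algebra.algebraMap_eq_smul_one]

lemma my_antipode_mul (a b : H) :
    antipode (R := k) (a * b) = antipode (R := k) b * antipode (R := k) a := by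
  classical
  obtain ra := Coalgebra.Repr.arbitrary k a
  obtain rb := Coalgebra.Repr.arbitrary k b
  set U : (H ⊗[k] (H ⊗[k] H)) ⊗[k] (H ⊗[k] (H ⊗[k] H)) →ₗ[k] H :=
    LinearMap.mul' k H ∘ₗ
      TensorProduct.map (antipode (R := k) ∘ₗ LinearMap.mul' k H) (W₂aux k H) ∘ₗ
      (TensorProduct.tensorTensorTensorComm k H (H ⊗[k] H) H (H ⊗[k] H)).toLinearMap with hU
  have hUtmul : ∀ (x : H) (X : H ⊗[k] H) (y : H) (Y : H ⊗[k] H),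
      U ((x ⊗ₜ[k] X) ⊗ₜ[k] (y ⊗ₜ[k] Y)) =
        antipode (R := k) (x * y) * W₂aux k H (X ⊗ₜ[k] Y) := by
    intro x X y Y; simp [hU]
  have ta : (comul (R := k)).lTensor H (comul (R := k) a) =
      ∑ i ∈ ra.index, ra.left i ⊗ₜ[k] comul (R := k) (ra.right i) := by
    rw [← ra.eq, map_sum]; simp
  have tb : (comul (R := k)).lTensor H (comul (R := k) b) =
      ∑ j ∈ rb.index, rb.left j ⊗ₜ[k] comul (R := k) (rb.right j) := by
    rw [← rb.eq, map_sum]; simp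
  -- Evaluation A : the expression equals S(a*b)
  have evalA :
      U (((comul (R := k)).lTensor H (comul (R := k) a)) ⊗ₜ[k]
          ((comul (R := k)).lTensor H (comul (R := k) b))) = antipode (R := k) (a * b) := by
    rw [ta, tb, sum_tmul, map_sum]
    have : ∀ i ∈ ra.index,
        U ((ra.left i ⊗ₜ[k] comul (R := k) (ra.right i)) ⊗ₜ[k]
            ∑ j ∈ rb.index, rb.left j ⊗ₜ[k] comul (R := k) (rb.right j)) =
          ∑ j ∈ rb.index, (counit (R := k) (ra.right i) * counit (R := k) (rb.right j)) •
            antipode (R := k) (ra.left i * rb.left j) := by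
      intro i _
      rw [tmul_sum, map_sum]
      refine Finset.sum_congr rfl fun j _ => ?_
      rw [hUtmul, W₂aux_comul, mul_smul_comm, mul_one]
    rw [Finset.sum_congr rfl this]
    have ha := repr_counit_right ra
    have hb := repr_counit_right rb
    calc ∑ i ∈ ra.index, ∑ j ∈ rb.index,
          (counit (R := k) (ra.right i) * counit (R := k) (rb.right j)) •
            antipode (R := k) (ra.left i * rb.left j)
        = antipode (R := k)
            ((∑ i ∈ ra.index, counit (R := k) (ra.right i) • ra.left i) *
              (∑ j ∈ rb.index, counit (R := k) (rb.right j) • rb.left j)) := by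
          rw [Finset.sum_mul_sum, map_sum]
          refine Finset.sum_congr rfl fun i _ => ?_
          rw [map_sum]
          refine Finset.sum_congr rfl fun j _ => ?_
          rw [smul_mul_smul_comm, map_smul]
      _ = antipode (R := k) (a * b) := by rw [ha, hb]
  -- Evaluation B : the expression equals S b * S a
  have evalB :
      U (((comul (R := k)).lTensor H (comul (R := k) a)) ⊗ₜ[k]
          ((comul (R := k)).lTensor H (comul (R := k) b))) =
        antipode (R := k) b * antipode (R := k) a := by
    have hca : (comul (R := k)).lTensor H (comul (R := k) a) =
        ∑ i ∈ ra.index, (TensorProduct.assoc k H H H) (comul (R := k) (ra.left i) ⊗ₜ[k] ra.right i) := by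
      rw [← Coalgebra.coassoc_apply, ← ra.eq, map_sum, map_sum]
      simp
    have hcb : (comul (R := k)).lTensor H (comul (R := k) b) =
        ∑ j ∈ rb.index, (TensorProduct.assoc k H H H) (comul (R := k) (rb.left j) ⊗ₜ[k] rb.right j) := by
      rw [← Coalgebra.coassoc_apply, ← rb.eq, map_sum, map_sum]
      simp
    have claim3 : ∀ (X : H ⊗[k] H) (x : H) (Y : H ⊗[k] H) (y : H),
        U ((TensorProduct.assoc k H H H (X ⊗ₜ[k] x)) ⊗ₜ[k]
            (TensorProduct.assoc k H H H (Y ⊗ₜ[k] y))) =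
          Ψaux k H (X ⊗ₜ[k] Y) * (antipode (R := k) y * antipode (R := k) x) := by
      intro X x Y y
      induction X using TensorProduct.induction_on with
      | zero => simp
      | tmul u u' =>
          induction Y using TensorProduct.induction_on with
          | zero => simp
          | tmul v v' =>
              simp only [TensorProduct.assoc_tmul]
              rw [hUtmul]
              simp [W₂aux_tmul, Ψaux, mul_assoc]
          | add z w hz hw =>
              simp only [add_tmul, tmul_add, map_add, hz, hw, add_mul]
      | add z w hz hw =>
          simp only [add_tmul, tmul_add, map_add, hz, hw, add_mul]
    rw [hca, hcb, sum_tmul, map_sum]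
    have : ∀ i ∈ ra.index,
        U ((TensorProduct.assoc k H H H (comul (R := k) (ra.left i) ⊗ₜ[k] ra.right i)) ⊗ₜ[k]
            ∑ j ∈ rb.index,
              (TensorProduct.assoc k H H H) (comul (R := k) (rb.left j) ⊗ₜ[k] rb.right j)) =
          ∑ j ∈ rb.index, (counit (R := k) (ra.left i) * counit (R := k) (rb.left j)) •
            (antipode (R := k) (rb.right j) * antipode (R := k) (ra.right i)) := by
      intro i _
      rw [tmul_sum, map_sum]
      refine Finset.sum_congr rfl fun j _ => ?_
      rw [claim3, Ψaux_comul, smul_mul_assoc, one_mul]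
    rw [Finset.sum_congr rfl this]
    have ha := repr_counit_left ra
    have hb := repr_counit_left rb
    calc ∑ i ∈ ra.index, ∑ j ∈ rb.index,
          (counit (R := k) (ra.left i) * counit (R := k) (rb.left j)) •
            (antipode (R := k) (rb.right j) * antipode (R := k) (ra.right i))
        = (antipode (R := k) (∑ j ∈ rb.index, counit (R := k) (rb.left j) • rb.right j)) *
            (antipode (R := k) (∑ i ∈ ra.index, counit (R := k) (ra.left i) • ra.right i)) := by
          rw [map_sum, map_sum, Finset.sum_mul]
          rw [Finset.sum_comm]
          refine Finset.sum_congr rfl fun j _ => ?_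
          rw [Finset.mul_sum]
          refine Finset.sum_congr rfl fun i _ => ?_
          rw [map_smul, map_smul, smul_mul_smul_comm, mul_comm (counit (R := k) (rb.left j))]
      _ = antipode (R := k) b * antipode (R := k) a := by rw [ha, hb]
  exact evalA.symm.trans evalB

end Anti




section ConvCancel
variable {k C B : Type*} [Field k] [AddCommGroup C] [Module k C] [Coalgebra k C]
  [Ring B] [Algebra k B]

lemma convCancel (f g h : C →ₗ[k] B)
    (hfg : ∀ c, LinearMap.mul' k B (TensorProduct.map f g (comul (R := k) c)) =
      counit (R := k) c • 1)
    (hgh : ∀ c, LinearMap.mul' k B (TensorProduct.map g h (comul (R := k) c)) =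
      counit (R := k) c • 1) : f = h := by
  classical
  ext c
  obtain rc := Coalgebra.Repr.arbitrary k c
  set U : C ⊗[k] (C ⊗[k] C) →ₗ[k] B :=
    LinearMap.mul' k B ∘ₗ TensorProduct.map f (LinearMap.mul' k B ∘ₗ TensorProduct.map g h)
    with hU
  have hUtmul : ∀ (x : C) (Z : C ⊗[k] C),
      U (x ⊗ₜ[k] Z) = f x * LinearMap.mul' k B (TensorProduct.map g h Z) := by
    intro x Z; simp [hU]
  have tc : (comul (R := k)).lTensor C (comul (R := k) c) =
      ∑ i ∈ rc.index, rc.left i ⊗ₜ[k] comul (R := k) (rc.right i) := by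
    rw [← rc.eq, map_sum]; simp
  have eA : U ((comul (R := k)).lTensor C (comul (R := k) c)) = f c := by
    rw [tc, map_sum]
    calc ∑ i ∈ rc.index, U (rc.left i ⊗ₜ[k] comul (R := k) (rc.right i))
        = ∑ i ∈ rc.index, counit (R := k) (rc.right i) • f (rc.left i) := by
          refine Finset.sum_congr rfl fun i _ => ?_
          rw [hUtmul, hgh, mul_smul_comm, mul_one]
      _ = f c := by
          conv_rhs => rw [← repr_counit_right rc]
          rw [map_sum]
          simp
  have eB : U ((comul (R := k)).lTensor C (comul (R := k) c)) = h c := by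
    have hcc : (comul (R := k)).lTensor C (comul (R := k) c) =
        ∑ i ∈ rc.index,
          (TensorProduct.assoc k C C C) (comul (R := k) (rc.left i) ⊗ₜ[k] rc.right i) := by
      rw [← Coalgebra.coassoc_apply, ← rc.eq, map_sum, map_sum]
      simp
    have claim : ∀ (X : C ⊗[k] C) (x : C),
        U ((TensorProduct.assoc k C C C) (X ⊗ₜ[k] x)) =
          LinearMap.mul' k B (TensorProduct.map f g X) * h x := by
      intro X x
      induction X using TensorProduct.induction_on with
      | zero => simp
      | tmul u u' =>
          simp only [TensorProduct.assoc_tmul]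
          rw [hUtmul]
          simp [mul_assoc]
      | add z w hz hw => simp only [add_tmul, map_add, hz, hw, add_mul]
    rw [hcc, map_sum]
    calc ∑ i ∈ rc.index,
          U ((TensorProduct.assoc k C C C) (comul (R := k) (rc.left i) ⊗ₜ[k] rc.right i))
        = ∑ i ∈ rc.index, counit (R := k) (rc.left i) • h (rc.right i) := by
          refine Finset.sum_congr rfl fun i _ => ?_
          rw [claim, hfg, smul_mul_assoc, one_mul]
      _ = h c := by
          conv_rhs => rw [← repr_counit_left rc]
          rw [map_sum]
          simp
  rw [← eA, eB]

end ConvCancel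

section AntipodeComm
variable {k A B : Type*} [Field k] [Ring A] [Ring B] [HopfAlgebra k A] [HopfAlgebra k B]


lemma antipode_comm' (f : A →ₗ[k] B)
    (hmul : ∀ x y : A, f (x * y) = f x * f y) (hone : f 1 = 1)
    (hcomul : ∀ a : A, TensorProduct.map f f (comul (R := k) a) = comul (R := k) (f a))
    (hcounit : ∀ a : A, counit (R := k) (f a) = counit (R := k) a) (a : A) :
    antipode (R := k) (f a) = f (antipode (R := k) a) := by
  have h1 : ∀ c : A, LinearMap.mul' k B
      (TensorProduct.map (f ∘ₗ antipode (R := k)) f (comul (R := k) c)) =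
        counit (R := k) c • 1 := by
    intro c
    have key : ∀ z : A ⊗[k] A,
        LinearMap.mul' k B (TensorProduct.map (f ∘ₗ antipode (R := k)) f z) =
          f (LinearMap.mul' k A ((antipode (R := k)).rTensor A z)) := by
      intro z
      induction z using TensorProduct.induction_on with
      | zero => simp
      | tmul x y =>
          simp only [TensorProduct.map_tmul, LinearMap.mul'_apply, LinearMap.comp_apply,
            LinearMap.rTensor_tmul]
          exact (hmul _ _).symm
      | add z w hz hw => simp only [map_add, hz, hw]
    rw [key, mul_antipode_rTensor_comul_apply, Algebra.algebraMap_eq_smul_one, map_smul, hone]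
  have h2 : ∀ c : A, LinearMap.mul' k B
      (TensorProduct.map f (antipode (R := k) ∘ₗ f) (comul (R := k) c)) =
        counit (R := k) c • 1 := by
    intro c
    have key : ∀ z : A ⊗[k] A,
        TensorProduct.map f (antipode (R := k) ∘ₗ f) z =
          (antipode (R := k)).lTensor B (TensorProduct.map f f z) := by
      intro z
      induction z using TensorProduct.induction_on with
      | zero => simp
      | tmul x y => simp
      | add z w hz hw => simp only [map_add, hz, hw]
    rw [key, hcomul, mul_antipode_lTensor_comul_apply, hcounit,
      Algebra.algebraMap_eq_smul_one]
  have := convCancel (k := k) (C := A) (B := B)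
    (f ∘ₗ antipode (R := k)) f (antipode (R := k) ∘ₗ f) h1 h2
  exact (LinearMap.congr_fun this a).symm

end AntipodeComm


section SinvLemmas
variable {k H : Type*} [Field k] [Ring H] [HopfAlgebra k H]


variable (Sinv : H →ₗ[k] H)

lemma Sinv_one (hS : ∀ h : H, Sinv (antipode (R := k) h) = h) : Sinv 1 = 1 := by
  have := hS (1 : H)
  rwa [my_antipode_one] at this

lemma icore1 (hS : ∀ h : H, Sinv (antipode (R := k) h) = h)
    (hS' : ∀ h : H, antipode (R := k) (Sinv h) = h) (v : H) :
    LinearMap.mul' k H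
      (TensorProduct.map LinearMap.id Sinv ((TensorProduct.comm k H H) (comul (R := k) v))) =
      counit (R := k) v • 1 := by
  have key : ∀ z : H ⊗[k] H,
      antipode (R := k)
        (LinearMap.mul' k H (TensorProduct.map LinearMap.id Sinv ((TensorProduct.comm k H H) z))) =
      LinearMap.mul' k H ((antipode (R := k)).lTensor H z) := by
    intro z
    induction z using TensorProduct.induction_on with
    | zero => simp
    | tmul x y =>
        simp only [TensorProduct.comm_tmul, TensorProduct.map_tmul, LinearMap.mul'_apply,
          LinearMap.lTensor_tmul, LinearMap.id_coe, id_eq]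
        rw [my_antipode_mul, hS']
    | add z w hz hw => simp only [map_add, hz, hw]
  have h := key (comul (R := k) v)
  rw [mul_antipode_lTensor_comul_apply] at h
  have h2 := congrArg Sinv h
  rw [hS] at h2
  rw [h2, Algebra.algebraMap_eq_smul_one, map_smul, Sinv_one Sinv hS]

lemma icore2 (hS : ∀ h : H, Sinv (antipode (R := k) h) = h)
    (hS' : ∀ h : H, antipode (R := k) (Sinv h) = h) (v : H) :
    LinearMap.mul' k H
      (TensorProduct.map Sinv LinearMap.id ((TensorProduct.comm k H H) (comul (R := k) v))) =
      counit (R := k) v • 1 := by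
  have key : ∀ z : H ⊗[k] H,
      antipode (R := k)
        (LinearMap.mul' k H (TensorProduct.map Sinv LinearMap.id ((TensorProduct.comm k H H) z))) =
      LinearMap.mul' k H ((antipode (R := k)).rTensor H z) := by
    intro z
    induction z using TensorProduct.induction_on with
    | zero => simp
    | tmul x y =>
        simp only [TensorProduct.comm_tmul, TensorProduct.map_tmul, LinearMap.mul'_apply,
          LinearMap.rTensor_tmul, LinearMap.id_coe, id_eq]
        rw [my_antipode_mul, hS']
    | add z w hz hw => simp only [map_add, hz, hw]
  have h := key (comul (R := k) v)
  rw [mul_antipode_rTensor_comul_apply] at h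
  have h2 := congrArg Sinv h
  rw [hS] at h2
  rw [h2, Algebra.algebraMap_eq_smul_one, map_smul, Sinv_one Sinv hS]

variable (f fi : H →ₗ[k] H)

lemma Sinv_comm (hS : ∀ h : H, Sinv (antipode (R := k) h) = h)
    (hS' : ∀ h : H, antipode (R := k) (Sinv h) = h)
    (hmul : ∀ x y : H, f (x * y) = f x * f y) (hone : f 1 = 1)
    (hcomul : ∀ a : H, TensorProduct.map f f (comul (R := k) a) = comul (R := k) (f a))
    (hcounit : ∀ a : H, counit (R := k) (f a) = counit (R := k) a) (x : H) :
    Sinv (f x) = f (Sinv x) := by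
  conv_lhs => rw [show x = antipode (R := k) (Sinv x) from (hS' x).symm]
  rw [← antipode_comm' f hmul hone hcomul hcounit, hS]

/-- `∑ fi(h₂) * fi(Sinv h₁) = ε(h) 1` -/
lemma qgen1 (hS : ∀ h : H, Sinv (antipode (R := k) h) = h)
    (hS' : ∀ h : H, antipode (R := k) (Sinv h) = h)
    (hfi : ∀ x : H, fi (f x) = x) (hif : ∀ x : H, f (fi x) = x)
    (hmul : ∀ x y : H, f (x * y) = f x * f y) (hone : f 1 = 1)
    (hcomul : ∀ a : H, TensorProduct.map f f (comul (R := k) a) = comul (R := k) (f a))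
    (hcounit : ∀ a : H, counit (R := k) (f a) = counit (R := k) a) (u : H) :
    LinearMap.mul' k H
      (TensorProduct.map fi (fi ∘ₗ Sinv) ((TensorProduct.comm k H H) (comul (R := k) u))) =
      counit (R := k) u • 1 := by
  have hcom : comul (R := k) u = TensorProduct.map f f (comul (R := k) (fi u)) := by
    rw [hcomul, hif]
  have key : ∀ z : H ⊗[k] H,
      TensorProduct.map fi (fi ∘ₗ Sinv) ((TensorProduct.comm k H H) (TensorProduct.map f f z)) =
        TensorProduct.map LinearMap.id Sinv ((TensorProduct.comm k H H) z) := by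
    intro z
    induction z using TensorProduct.induction_on with
    | zero => simp
    | tmul x y =>
        simp only [TensorProduct.map_tmul, TensorProduct.comm_tmul, LinearMap.comp_apply,
          LinearMap.id_coe, id_eq]
        rw [hfi, Sinv_comm Sinv f hS hS' hmul hone hcomul hcounit, hfi]
    | add z w hz hw => simp only [map_add, hz, hw]
  rw [hcom, key, icore1 Sinv hS hS']
  have h5 : counit (R := k) (f (fi u)) = counit (R := k) (fi u) := hcounit _
  rw [hif] at h5
  rw [← h5]

/-- `∑ fi(Sinv h₂) * fi(h₁) = ε(h) 1` -/
lemma qgen2 (hS : ∀ h : H, Sinv (antipode (R := k) h) = h)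
    (hS' : ∀ h : H, antipode (R := k) (Sinv h) = h)
    (hfi : ∀ x : H, fi (f x) = x) (hif : ∀ x : H, f (fi x) = x)
    (hmul : ∀ x y : H, f (x * y) = f x * f y) (hone : f 1 = 1)
    (hcomul : ∀ a : H, TensorProduct.map f f (comul (R := k) a) = comul (R := k) (f a))
    (hcounit : ∀ a : H, counit (R := k) (f a) = counit (R := k) a) (u : H) :
    LinearMap.mul' k H
      (TensorProduct.map (fi ∘ₗ Sinv) fi ((TensorProduct.comm k H H) (comul (R := k) u))) =
      counit (R := k) u • 1 := by
  have hcom : comul (R := k) u = TensorProduct.map f f (comul (R := k) (fi u)) := by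
    rw [hcomul, hif]
  have key : ∀ z : H ⊗[k] H,
      TensorProduct.map (fi ∘ₗ Sinv) fi ((TensorProduct.comm k H H) (TensorProduct.map f f z)) =
        TensorProduct.map Sinv LinearMap.id ((TensorProduct.comm k H H) z) := by
    intro z
    induction z using TensorProduct.induction_on with
    | zero => simp
    | tmul x y =>
        simp only [TensorProduct.map_tmul, TensorProduct.comm_tmul, LinearMap.comp_apply,
          LinearMap.id_coe, id_eq]
        rw [hfi, Sinv_comm Sinv f hS hS' hmul hone hcomul hcounit, hfi]
    | add z w hz hw => simp only [map_add, hz, hw]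
  rw [hcom, key, icore2 Sinv hS hS']
  have h5 : counit (R := k) (f (fi u)) = counit (R := k) (fi u) := hcounit _
  rw [hif] at h5
  rw [← h5]

end SinvLemmas

end AuxHopf

section AuxMainOuter
set_option synthInstance.maxHeartbeats 1000000
set_option maxHeartbeats 1000000
open Coalgebra

section AuxMain
variable {M N : Type*} [AddCommGroup M] [Module k M] [AddCommGroup N] [Module k N]

open Coalgebra

/-- `(h ⊗ (h₂ ⊗ m₀)) ⊗ ((n₀ ⊗ t₁) ⊗ t) ↦
  ((m₀ ◁ dInv t) ◁ dInvS t₁) ⊗ (bInvS h₂ ▷ (bInv h ▷ n₀))` -/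
noncomputable def phi1 (bInv bInvS : H₁ →ₗ[k] H₁) (dInv dInvS : H₂ →ₗ[k] H₂)
    (SM : YDLStruct k H₁ H₂ M) (SN : YDLStruct k H₁ H₂ N) :
    (H₁ ⊗[k] (H₁ ⊗[k] M)) ⊗[k] ((N ⊗[k] H₂) ⊗[k] H₂) →ₗ[k] M ⊗[k] N :=
  (TensorProduct.comm k N M).toLinearMap ∘ₗ
  TensorProduct.map
    (SN.actL ∘ₗ TensorProduct.map bInvS LinearMap.id ∘ₗ (TensorProduct.comm k N H₁).toLinearMap ∘ₗ
      TensorProduct.map (SN.actL ∘ₗ TensorProduct.map bInv LinearMap.id) LinearMap.id)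
    (SM.actR ∘ₗ TensorProduct.map LinearMap.id dInvS ∘ₗ (TensorProduct.comm k H₂ M).toLinearMap ∘ₗ
      TensorProduct.map LinearMap.id (SM.actR ∘ₗ TensorProduct.map LinearMap.id dInv)) ∘ₗ
  (TensorProduct.tensorTensorTensorComm k (H₁ ⊗[k] N) H₂ H₁ (M ⊗[k] H₂)).toLinearMap ∘ₗ
  TensorProduct.map (TensorProduct.assoc k H₁ N H₂).symm.toLinearMap
    (TensorProduct.assoc k H₁ M H₂).toLinearMap ∘ₗ
  (TensorProduct.tensorTensorTensorComm k H₁ (H₁ ⊗[k] M) (N ⊗[k] H₂) H₂).toLinearMap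

lemma phi1_tmul (bInv bInvS : H₁ →ₗ[k] H₁) (dInv dInvS : H₂ →ₗ[k] H₂)
    (SM : YDLStruct k H₁ H₂ M) (SN : YDLStruct k H₁ H₂ N)
    (h h₂ : H₁) (m₀ : M) (n₀ : N) (t₁ t : H₂) :
    phi1 bInv bInvS dInv dInvS SM SN
        ((h ⊗ₜ[k] (h₂ ⊗ₜ[k] m₀)) ⊗ₜ[k] ((n₀ ⊗ₜ[k] t₁) ⊗ₜ[k] t)) =
      SM.actR (SM.actR (m₀ ⊗ₜ[k] dInv t) ⊗ₜ[k] dInvS t₁) ⊗ₜ[k]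
        SN.actL (bInvS h₂ ⊗ₜ[k] SN.actL (bInv h ⊗ₜ[k] n₀)) := by
  simp [phi1]

lemma braidInv_comp_braid
    (bInv bInvS : H₁ →ₗ[k] H₁) (dInv dInvS : H₂ →ₗ[k] H₂)
    (SM : YDLStruct k H₁ H₂ M) (SN : YDLStruct k H₁ H₂ N)
    (hlongL : ∀ (h : H₁) (n : N), SN.coR (SN.actL (h ⊗ₜ[k] n)) =
      TensorProduct.map (SN.actL ∘ₗ TensorProduct.mk k H₁ N h) LinearMap.id (SN.coR n))
    (hlongR : ∀ (m : M) (t : H₂), SM.coL (SM.actR (m ⊗ₜ[k] t)) =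
      TensorProduct.map LinearMap.id (SM.actR ∘ₗ (TensorProduct.mk k M H₂).flip t) (SM.coL m))
    (hcoLcoassoc : ∀ m : M, TensorProduct.map Coalgebra.comul LinearMap.id (SM.coL m) =
      (TensorProduct.assoc k H₁ H₁ M).symm
        (TensorProduct.map LinearMap.id SM.coL (SM.coL m)))
    (hcoRcoassoc : ∀ n : N, TensorProduct.map LinearMap.id Coalgebra.comul (SN.coR n) =
      TensorProduct.assoc k N H₂ H₂ (TensorProduct.map SN.coR LinearMap.id (SN.coR n)))
    (hactLmul : ∀ (h h' : H₁) (n : N),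
      SN.actL ((h * h') ⊗ₜ[k] n) = SN.actL (h ⊗ₜ[k] SN.actL (h' ⊗ₜ[k] n)))
    (hactLone : ∀ n : N, SN.actL (1 ⊗ₜ[k] n) = n)
    (hactRmul : ∀ (m : M) (t t' : H₂),
      SM.actR (SM.actR (m ⊗ₜ[k] t) ⊗ₜ[k] t') = SM.actR (m ⊗ₜ[k] (t * t')))
    (hactRone : ∀ m : M, SM.actR (m ⊗ₜ[k] 1) = m)
    (hcoLcounit : ∀ m : M,
      TensorProduct.lid k M (TensorProduct.map Coalgebra.counit LinearMap.id (SM.coL m)) = m)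
    (hcoRcounit : ∀ n : N,
      TensorProduct.rid k N (TensorProduct.map LinearMap.id Coalgebra.counit (SN.coR n)) = n)
    (hq1 : ∀ u : H₁, LinearMap.mul' k H₁
      (TensorProduct.map bInvS bInv ((TensorProduct.comm k H₁ H₁) (comul (R := k) u))) =
      counit (R := k) u • 1)
    (hq2 : ∀ u : H₂, LinearMap.mul' k H₂
      (TensorProduct.map dInv dInvS ((TensorProduct.comm k H₂ H₂) (comul (R := k) u))) =
      counit (R := k) u • 1) :
    braidInv bInvS dInvS SM SN ∘ₗ braid bInv dInv SM SN = LinearMap.id := by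
  apply TensorProduct.ext'
  intro m n
  simp only [LinearMap.comp_apply, LinearMap.id_apply]
  have hbraid : braid bInv dInv SM SN (m ⊗ₜ[k] n) =
      TensorProduct.map (SN.actL ∘ₗ TensorProduct.map bInv LinearMap.id)
        (SM.actR ∘ₗ TensorProduct.map LinearMap.id dInv)
        (tensorTensorTensorComm k H₁ M N H₂ (SM.coL m ⊗ₜ[k] SN.coR n)) := by
    simp [braid]
  -- step 1
  have key1 : ∀ (Z : H₁ ⊗[k] M) (W : N ⊗[k] H₂),
      braidInv bInvS dInvS SM SN
        (TensorProduct.map (SN.actL ∘ₗ TensorProduct.map bInv LinearMap.id)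
          (SM.actR ∘ₗ TensorProduct.map LinearMap.id dInv)
          (tensorTensorTensorComm k H₁ M N H₂ (Z ⊗ₜ[k] W))) =
      phi1 bInv bInvS dInv dInvS SM SN
        ((TensorProduct.map LinearMap.id SM.coL Z) ⊗ₜ[k]
          (TensorProduct.map SN.coR LinearMap.id W)) := by
    intro Z W
    induction Z using TensorProduct.induction_on with
    | zero => simp
    | add Z₁ Z₂ h1 h2 => simp only [add_tmul, map_add, h1, h2]
    | tmul h m₀ =>
      induction W using TensorProduct.induction_on with
      | zero => simp
      | add W₁ W₂ h1 h2 => simp only [tmul_add, map_add, h1, h2]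
      | tmul n₀ t =>
        simp only [tensorTensorTensorComm_tmul, TensorProduct.map_tmul,
          LinearMap.comp_apply, LinearMap.id_coe, id_eq]
        have hbinv : ∀ (x : N) (y : M), braidInv bInvS dInvS SM SN (x ⊗ₜ[k] y) =
            TensorProduct.map
              (SM.actR ∘ₗ TensorProduct.map LinearMap.id dInvS ∘ₗ
                (TensorProduct.comm k H₂ M).toLinearMap)
              (SN.actL ∘ₗ TensorProduct.map bInvS LinearMap.id ∘ₗ
                (TensorProduct.comm k N H₁).toLinearMap)
              ((TensorProduct.comm k (N ⊗[k] H₁) (H₂ ⊗[k] M))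
                ((tensorTensorTensorComm k N H₂ H₁ M)
                  ((SN.coR x) ⊗ₜ[k] (SM.coL y)))) := by
          intro x y; simp [braidInv]
        rw [hbinv]
        rw [hlongL (bInv h) n₀, hlongR m₀ (dInv t)]
        generalize SN.coR n₀ = X
        generalize SM.coL m₀ = Y
        induction X using TensorProduct.induction_on with
        | zero => simp
        | add X₁ X₂ hx1 hx2 => simp only [add_tmul, tmul_add, map_add, hx1, hx2]
        | tmul n₀₀ t₁ =>
          induction Y using TensorProduct.induction_on with
          | zero => simp
          | add Y₁ Y₂ hy1 hy2 => simp only [add_tmul, tmul_add, map_add, hy1, hy2]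
          | tmul h₂ m₀₀ =>
            simp only [TensorProduct.map_tmul, LinearMap.comp_apply, LinearMap.id_coe, id_eq,
              TensorProduct.mk_apply, LinearMap.flip_apply,
              tensorTensorTensorComm_tmul, TensorProduct.comm_tmul, phi1_tmul,
              LinearEquiv.coe_coe]
  -- step 2 : reassociation
  have key2 : ∀ (X : (H₁ ⊗[k] H₁) ⊗[k] M) (Y : N ⊗[k] (H₂ ⊗[k] H₂)),
      phi1 bInv bInvS dInv dInvS SM SN
        ((TensorProduct.assoc k H₁ H₁ M X) ⊗ₜ[k] ((TensorProduct.assoc k N H₂ H₂).symm Y)) =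
      TensorProduct.comm k N M
        (TensorProduct.map
          (SN.actL ∘ₗ TensorProduct.map
            (LinearMap.mul' k H₁ ∘ₗ TensorProduct.map bInvS bInv ∘ₗ
              (TensorProduct.comm k H₁ H₁).toLinearMap) LinearMap.id)
          (SM.actR ∘ₗ TensorProduct.map LinearMap.id
            (LinearMap.mul' k H₂ ∘ₗ TensorProduct.map dInv dInvS ∘ₗ
              (TensorProduct.comm k H₂ H₂).toLinearMap))
          (tensorTensorTensorComm k (H₁ ⊗[k] H₁) M N (H₂ ⊗[k] H₂) (X ⊗ₜ[k] Y))) := by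
    intro X Y
    induction X using TensorProduct.induction_on with
    | zero => simp
    | add X₁ X₂ h1 h2 => simp only [map_add, add_tmul, h1, h2]
    | tmul x m₀₀ =>
      induction x using TensorProduct.induction_on with
      | zero => simp
      | add x₁ x₂ h1 h2 => simp only [map_add, add_tmul, h1, h2]
      | tmul a b =>
        induction Y using TensorProduct.induction_on with
        | zero => simp
        | add Y₁ Y₂ h1 h2 => simp only [map_add, tmul_add, h1, h2]
        | tmul n₀₀ y =>
          induction y using TensorProduct.induction_on with
          | zero => simp
          | add y₁ y₂ h1 h2 => simp only [map_add, tmul_add, h1, h2]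
          | tmul t t' =>
            simp only [TensorProduct.assoc_tmul, TensorProduct.assoc_symm_tmul, phi1_tmul,
              tensorTensorTensorComm_tmul, TensorProduct.map_tmul, TensorProduct.comm_tmul,
              LinearMap.comp_apply, LinearMap.mul'_apply, LinearMap.id_coe, id_eq,
              LinearEquiv.coe_coe]
            rw [hactRmul, ← hactLmul]
  -- step 3 : counit collapse
  have keyFIN : ∀ (Z : H₁ ⊗[k] M) (W : N ⊗[k] H₂),
      TensorProduct.comm k N M
        (TensorProduct.map
          (SN.actL ∘ₗ TensorProduct.map
            (LinearMap.mul' k H₁ ∘ₗ TensorProduct.map bInvS bInv ∘ₗ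
              (TensorProduct.comm k H₁ H₁).toLinearMap) LinearMap.id)
          (SM.actR ∘ₗ TensorProduct.map LinearMap.id
            (LinearMap.mul' k H₂ ∘ₗ TensorProduct.map dInv dInvS ∘ₗ
              (TensorProduct.comm k H₂ H₂).toLinearMap))
          (tensorTensorTensorComm k (H₁ ⊗[k] H₁) M N (H₂ ⊗[k] H₂)
            ((TensorProduct.map Coalgebra.comul LinearMap.id Z) ⊗ₜ[k]
              (TensorProduct.map LinearMap.id Coalgebra.comul W)))) =
      (TensorProduct.lid k M (TensorProduct.map Coalgebra.counit LinearMap.id Z)) ⊗ₜ[k]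
        (TensorProduct.rid k N (TensorProduct.map LinearMap.id Coalgebra.counit W)) := by
    intro Z W
    induction Z using TensorProduct.induction_on with
    | zero => simp
    | add Z₁ Z₂ h1 h2 => simp only [map_add, add_tmul, h1, h2, TensorProduct.add_tmul]
    | tmul h m₀ =>
      induction W using TensorProduct.induction_on with
      | zero => simp
      | add W₁ W₂ h1 h2 => simp only [map_add, tmul_add, h1, h2, TensorProduct.tmul_add]
      | tmul n₀ t =>
        simp only [TensorProduct.map_tmul, LinearMap.id_coe, id_eq,
          tensorTensorTensorComm_tmul, LinearMap.comp_apply, LinearEquiv.coe_coe]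
        rw [hq1 h, hq2 t]
        rw [show ((counit (R := k) h • (1 : H₁)) ⊗ₜ[k] n₀ : H₁ ⊗[k] N) =
          counit (R := k) h • ((1 : H₁) ⊗ₜ[k] n₀) from (smul_tmul' _ _ _).symm]
        rw [show (m₀ ⊗ₜ[k] (counit (R := k) t • (1 : H₂)) : M ⊗[k] H₂) =
          counit (R := k) t • (m₀ ⊗ₜ[k] (1 : H₂)) from (tmul_smul _ _ _)]
        rw [map_smul, map_smul, hactLone, hactRone]
        simp [TensorProduct.smul_tmul', TensorProduct.tmul_smul, smul_smul, mul_comm,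
          TensorProduct.lid_tmul, TensorProduct.rid_tmul]
  -- put everything together
  rw [hbraid, key1]
  rw [show TensorProduct.map LinearMap.id SM.coL (SM.coL m) =
      TensorProduct.assoc k H₁ H₁ M
        (TensorProduct.map Coalgebra.comul LinearMap.id (SM.coL m)) from by
    rw [hcoLcoassoc]; simp]
  rw [show TensorProduct.map SN.coR LinearMap.id (SN.coR n) =
      (TensorProduct.assoc k N H₂ H₂).symm
        (TensorProduct.map LinearMap.id Coalgebra.comul (SN.coR n)) from by
    rw [hcoRcoassoc]; simp]
  rw [key2, keyFIN, hcoLcounit, hcoRcounit]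

/-- `((n₀₀ ⊗ t₁) ⊗ t) ⊗ (h ⊗ (h₂ ⊗ m₀₀)) ↦
  (bInv h₂ ▷ (bInvS h ▷ n₀₀)) ⊗ ((m₀₀ ◁ dInvS t) ◁ dInv t₁)` -/
noncomputable def phi2 (bInv bInvS : H₁ →ₗ[k] H₁) (dInv dInvS : H₂ →ₗ[k] H₂)
    (SM : YDLStruct k H₁ H₂ M) (SN : YDLStruct k H₁ H₂ N) :
    ((N ⊗[k] H₂) ⊗[k] H₂) ⊗[k] (H₁ ⊗[k] (H₁ ⊗[k] M)) →ₗ[k] N ⊗[k] M :=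
  TensorProduct.map
    (SN.actL ∘ₗ TensorProduct.map bInv LinearMap.id ∘ₗ
      TensorProduct.map LinearMap.id (SN.actL ∘ₗ TensorProduct.map bInvS LinearMap.id) ∘ₗ
      (TensorProduct.assoc k H₁ H₁ N).toLinearMap ∘ₗ
      (TensorProduct.comm k N (H₁ ⊗[k] H₁)).toLinearMap ∘ₗ
      TensorProduct.map LinearMap.id (TensorProduct.comm k H₁ H₁).toLinearMap)
    (SM.actR ∘ₗ TensorProduct.map LinearMap.id dInv ∘ₗ
      TensorProduct.map (SM.actR ∘ₗ TensorProduct.map LinearMap.id dInvS) LinearMap.id ∘ₗ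
      (TensorProduct.assoc k M H₂ H₂).symm.toLinearMap ∘ₗ
      TensorProduct.map LinearMap.id (TensorProduct.comm k H₂ H₂).toLinearMap ∘ₗ
      (TensorProduct.comm k (H₂ ⊗[k] H₂) M).toLinearMap) ∘ₗ
  (TensorProduct.tensorTensorTensorComm k N (H₂ ⊗[k] H₂) (H₁ ⊗[k] H₁) M).toLinearMap ∘ₗ
  TensorProduct.map (TensorProduct.assoc k N H₂ H₂).toLinearMap
    (TensorProduct.assoc k H₁ H₁ M).symm.toLinearMap

lemma phi2_tmul (bInv bInvS : H₁ →ₗ[k] H₁) (dInv dInvS : H₂ →ₗ[k] H₂)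
    (SM : YDLStruct k H₁ H₂ M) (SN : YDLStruct k H₁ H₂ N)
    (n₀₀ : N) (t₁ t : H₂) (h h₂ : H₁) (m₀₀ : M) :
    phi2 bInv bInvS dInv dInvS SM SN
        (((n₀₀ ⊗ₜ[k] t₁) ⊗ₜ[k] t) ⊗ₜ[k] (h ⊗ₜ[k] (h₂ ⊗ₜ[k] m₀₀))) =
      SN.actL (bInv h₂ ⊗ₜ[k] SN.actL (bInvS h ⊗ₜ[k] n₀₀)) ⊗ₜ[k]
        SM.actR (SM.actR (m₀₀ ⊗ₜ[k] dInvS t) ⊗ₜ[k] dInv t₁) := by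
  simp [phi2]

lemma braid_comp_braidInv
    (bInv bInvS : H₁ →ₗ[k] H₁) (dInv dInvS : H₂ →ₗ[k] H₂)
    (SM : YDLStruct k H₁ H₂ M) (SN : YDLStruct k H₁ H₂ N)
    (hlongL : ∀ (h : H₁) (n : N), SN.coR (SN.actL (h ⊗ₜ[k] n)) =
      TensorProduct.map (SN.actL ∘ₗ TensorProduct.mk k H₁ N h) LinearMap.id (SN.coR n))
    (hlongR : ∀ (m : M) (t : H₂), SM.coL (SM.actR (m ⊗ₜ[k] t)) =
      TensorProduct.map LinearMap.id (SM.actR ∘ₗ (TensorProduct.mk k M H₂).flip t) (SM.coL m))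
    (hcoLcoassoc : ∀ m : M, TensorProduct.map Coalgebra.comul LinearMap.id (SM.coL m) =
      (TensorProduct.assoc k H₁ H₁ M).symm
        (TensorProduct.map LinearMap.id SM.coL (SM.coL m)))
    (hcoRcoassoc : ∀ n : N, TensorProduct.map LinearMap.id Coalgebra.comul (SN.coR n) =
      TensorProduct.assoc k N H₂ H₂ (TensorProduct.map SN.coR LinearMap.id (SN.coR n)))
    (hactLmul : ∀ (h h' : H₁) (n : N),
      SN.actL ((h * h') ⊗ₜ[k] n) = SN.actL (h ⊗ₜ[k] SN.actL (h' ⊗ₜ[k] n)))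
    (hactLone : ∀ n : N, SN.actL (1 ⊗ₜ[k] n) = n)
    (hactRmul : ∀ (m : M) (t t' : H₂),
      SM.actR (SM.actR (m ⊗ₜ[k] t) ⊗ₜ[k] t') = SM.actR (m ⊗ₜ[k] (t * t')))
    (hactRone : ∀ m : M, SM.actR (m ⊗ₜ[k] 1) = m)
    (hcoLcounit : ∀ m : M,
      TensorProduct.lid k M (TensorProduct.map Coalgebra.counit LinearMap.id (SM.coL m)) = m)
    (hcoRcounit : ∀ n : N,
      TensorProduct.rid k N (TensorProduct.map LinearMap.id Coalgebra.counit (SN.coR n)) = n)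
    (hq1' : ∀ u : H₁, LinearMap.mul' k H₁
      (TensorProduct.map bInv bInvS ((TensorProduct.comm k H₁ H₁) (comul (R := k) u))) =
      counit (R := k) u • 1)
    (hq2' : ∀ u : H₂, LinearMap.mul' k H₂
      (TensorProduct.map dInvS dInv ((TensorProduct.comm k H₂ H₂) (comul (R := k) u))) =
      counit (R := k) u • 1) :
    braid bInv dInv SM SN ∘ₗ braidInv bInvS dInvS SM SN = LinearMap.id := by
  apply TensorProduct.ext'
  intro n m
  simp only [LinearMap.comp_apply, LinearMap.id_apply]
  have hbinv : braidInv bInvS dInvS SM SN (n ⊗ₜ[k] m) =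
      TensorProduct.map
        (SM.actR ∘ₗ TensorProduct.map LinearMap.id dInvS ∘ₗ
          (TensorProduct.comm k H₂ M).toLinearMap)
        (SN.actL ∘ₗ TensorProduct.map bInvS LinearMap.id ∘ₗ
          (TensorProduct.comm k N H₁).toLinearMap)
        ((TensorProduct.comm k (N ⊗[k] H₁) (H₂ ⊗[k] M))
          ((tensorTensorTensorComm k N H₂ H₁ M) (SN.coR n ⊗ₜ[k] SM.coL m))) := by
    simp [braidInv]
  have key1 : ∀ (W : N ⊗[k] H₂) (Z : H₁ ⊗[k] M),
      braid bInv dInv SM SN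
        (TensorProduct.map
          (SM.actR ∘ₗ TensorProduct.map LinearMap.id dInvS ∘ₗ
            (TensorProduct.comm k H₂ M).toLinearMap)
          (SN.actL ∘ₗ TensorProduct.map bInvS LinearMap.id ∘ₗ
            (TensorProduct.comm k N H₁).toLinearMap)
          ((TensorProduct.comm k (N ⊗[k] H₁) (H₂ ⊗[k] M))
            ((tensorTensorTensorComm k N H₂ H₁ M) (W ⊗ₜ[k] Z)))) =
      phi2 bInv bInvS dInv dInvS SM SN
        ((TensorProduct.map SN.coR LinearMap.id W) ⊗ₜ[k]
          (TensorProduct.map LinearMap.id SM.coL Z)) := by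
    intro W Z
    induction W using TensorProduct.induction_on with
    | zero => simp
    | add W₁ W₂ h1 h2 => simp only [add_tmul, map_add, h1, h2]
    | tmul n₀ t =>
      induction Z using TensorProduct.induction_on with
      | zero => simp
      | add Z₁ Z₂ h1 h2 => simp only [tmul_add, map_add, h1, h2]
      | tmul h m₀ =>
        simp only [tensorTensorTensorComm_tmul, TensorProduct.comm_tmul,
          TensorProduct.map_tmul, LinearMap.comp_apply, LinearMap.id_coe, id_eq,
          LinearEquiv.coe_coe]
        have hbr : ∀ (x : M) (y : N), braid bInv dInv SM SN (x ⊗ₜ[k] y) =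
            TensorProduct.map (SN.actL ∘ₗ TensorProduct.map bInv LinearMap.id)
              (SM.actR ∘ₗ TensorProduct.map LinearMap.id dInv)
              (tensorTensorTensorComm k H₁ M N H₂ (SM.coL x ⊗ₜ[k] SN.coR y)) := by
          intro x y; simp [braid]
        rw [hbr]
        rw [hlongR m₀ (dInvS t), hlongL (bInvS h) n₀]
        generalize SM.coL m₀ = Z'
        generalize SN.coR n₀ = W'
        induction Z' using TensorProduct.induction_on with
        | zero => simp
        | add Z₁ Z₂ h1 h2 => simp only [add_tmul, tmul_add, map_add, h1, h2]
        | tmul h₂ m₀₀ =>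
          induction W' using TensorProduct.induction_on with
          | zero => simp
          | add W₁ W₂ h1 h2 => simp only [add_tmul, tmul_add, map_add, h1, h2]
          | tmul n₀₀ t₁ =>
            simp only [TensorProduct.map_tmul, LinearMap.comp_apply, LinearMap.id_coe, id_eq,
              TensorProduct.mk_apply, LinearMap.flip_apply, tensorTensorTensorComm_tmul,
              TensorProduct.comm_tmul, phi2_tmul, LinearEquiv.coe_coe]
  have key2 : ∀ (Y : N ⊗[k] (H₂ ⊗[k] H₂)) (X : (H₁ ⊗[k] H₁) ⊗[k] M),
      phi2 bInv bInvS dInv dInvS SM SN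
        (((TensorProduct.assoc k N H₂ H₂).symm Y) ⊗ₜ[k] (TensorProduct.assoc k H₁ H₁ M X)) =
      TensorProduct.map
        (SN.actL ∘ₗ TensorProduct.map
          (LinearMap.mul' k H₁ ∘ₗ TensorProduct.map bInv bInvS ∘ₗ
            (TensorProduct.comm k H₁ H₁).toLinearMap) LinearMap.id ∘ₗ
          (TensorProduct.comm k N (H₁ ⊗[k] H₁)).toLinearMap)
        (SM.actR ∘ₗ TensorProduct.map LinearMap.id
          (LinearMap.mul' k H₂ ∘ₗ TensorProduct.map dInvS dInv ∘ₗ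
            (TensorProduct.comm k H₂ H₂).toLinearMap) ∘ₗ
          (TensorProduct.comm k (H₂ ⊗[k] H₂) M).toLinearMap)
        (tensorTensorTensorComm k N (H₂ ⊗[k] H₂) (H₁ ⊗[k] H₁) M (Y ⊗ₜ[k] X)) := by
    intro Y X
    induction Y using TensorProduct.induction_on with
    | zero => simp
    | add Y₁ Y₂ h1 h2 => simp only [map_add, add_tmul, h1, h2]
    | tmul n₀₀ y =>
      induction y using TensorProduct.induction_on with
      | zero => simp
      | add y₁ y₂ h1 h2 => simp only [map_add, tmul_add, add_tmul, h1, h2]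
      | tmul t₁ t =>
        induction X using TensorProduct.induction_on with
        | zero => simp
        | add X₁ X₂ h1 h2 => simp only [map_add, tmul_add, h1, h2]
        | tmul x m₀₀ =>
          induction x using TensorProduct.induction_on with
          | zero => simp
          | add x₁ x₂ h1 h2 => simp only [map_add, add_tmul, tmul_add, h1, h2]
          | tmul h h₂ =>
            simp only [TensorProduct.assoc_tmul, TensorProduct.assoc_symm_tmul, phi2_tmul,
              tensorTensorTensorComm_tmul, TensorProduct.map_tmul, TensorProduct.comm_tmul,
              LinearMap.comp_apply, LinearMap.mul'_apply, LinearMap.id_coe, id_eq,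
              LinearEquiv.coe_coe]
            rw [hactRmul, ← hactLmul]
  have keyFIN : ∀ (W : N ⊗[k] H₂) (Z : H₁ ⊗[k] M),
      TensorProduct.map
        (SN.actL ∘ₗ TensorProduct.map
          (LinearMap.mul' k H₁ ∘ₗ TensorProduct.map bInv bInvS ∘ₗ
            (TensorProduct.comm k H₁ H₁).toLinearMap) LinearMap.id ∘ₗ
          (TensorProduct.comm k N (H₁ ⊗[k] H₁)).toLinearMap)
        (SM.actR ∘ₗ TensorProduct.map LinearMap.id
          (LinearMap.mul' k H₂ ∘ₗ TensorProduct.map dInvS dInv ∘ₗ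
            (TensorProduct.comm k H₂ H₂).toLinearMap) ∘ₗ
          (TensorProduct.comm k (H₂ ⊗[k] H₂) M).toLinearMap)
        (tensorTensorTensorComm k N (H₂ ⊗[k] H₂) (H₁ ⊗[k] H₁) M
          ((TensorProduct.map LinearMap.id Coalgebra.comul W) ⊗ₜ[k]
            (TensorProduct.map Coalgebra.comul LinearMap.id Z))) =
      (TensorProduct.rid k N (TensorProduct.map LinearMap.id Coalgebra.counit W)) ⊗ₜ[k]
        (TensorProduct.lid k M (TensorProduct.map Coalgebra.counit LinearMap.id Z)) := by
    intro W Z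
    induction W using TensorProduct.induction_on with
    | zero => simp
    | add W₁ W₂ h1 h2 => simp only [map_add, add_tmul, h1, h2]
    | tmul n₀ t =>
      induction Z using TensorProduct.induction_on with
      | zero => simp
      | add Z₁ Z₂ h1 h2 => simp only [map_add, tmul_add, h1, h2]
      | tmul h m₀ =>
        simp only [TensorProduct.map_tmul, LinearMap.id_coe, id_eq,
          tensorTensorTensorComm_tmul, LinearMap.comp_apply, TensorProduct.comm_tmul,
          LinearEquiv.coe_coe]
        rw [hq1' h, hq2' t]
        rw [show ((counit (R := k) h • (1 : H₁)) ⊗ₜ[k] n₀ : H₁ ⊗[k] N) =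
          counit (R := k) h • ((1 : H₁) ⊗ₜ[k] n₀) from (smul_tmul' _ _ _).symm]
        rw [show (m₀ ⊗ₜ[k] (counit (R := k) t • (1 : H₂)) : M ⊗[k] H₂) =
          counit (R := k) t • (m₀ ⊗ₜ[k] (1 : H₂)) from (tmul_smul _ _ _)]
        rw [map_smul, map_smul, hactLone, hactRone]
        simp [TensorProduct.smul_tmul', TensorProduct.tmul_smul, smul_smul, mul_comm,
          TensorProduct.lid_tmul, TensorProduct.rid_tmul]
  rw [hbinv, key1]
  rw [show TensorProduct.map SN.coR LinearMap.id (SN.coR n) =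
      (TensorProduct.assoc k N H₂ H₂).symm
        (TensorProduct.map LinearMap.id Coalgebra.comul (SN.coR n)) from by
    rw [hcoRcoassoc]; simp]
  rw [show TensorProduct.map LinearMap.id SM.coL (SM.coL m) =
      TensorProduct.assoc k H₁ H₁ M
        (TensorProduct.map Coalgebra.comul LinearMap.id (SM.coL m)) from by
    rw [hcoLcoassoc]; simp]
  rw [key2, keyFIN, hcoRcounit, hcoLcounit]

end AuxMain

end AuxMainOuter

/-- the braiding `c(m ⊗ n) = β₁⁻¹(m₍₋₁₎) ▷ n₍₀₎ ⊗ m₍₀₎ ◁ δ₁⁻¹(n₍₁₎)` is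
invertible with inverse `c'(n ⊗ m) = m₍₀₎ ◁ δ₁⁻¹(S₂⁻¹(n₍₁₎)) ⊗ β₁⁻¹(S₁⁻¹(m₍₋₁₎)) ▷ n₍₀₎`. -/
theorem braid_inverse {k H₁ H₂ M N : Type*} [Field k] [Ring H₁] [Ring H₂]
    [HopfAlgebra k H₁] [HopfAlgebra k H₂]
    [AddCommGroup M] [Module k M] [AddCommGroup N] [Module k N]
    (S₁inv : H₁ →ₗ[k] H₁) (S₂inv : H₂ →ₗ[k] H₂)
    (hS₁ : ∀ h : H₁, S₁inv (HopfAlgebra.antipode (R := k) h) = h)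
    (hS₁' : ∀ h : H₁, HopfAlgebra.antipode (R := k) (S₁inv h) = h)
    (hS₂ : ∀ h : H₂, S₂inv (HopfAlgebra.antipode (R := k) h) = h)
    (hS₂' : ∀ h : H₂, HopfAlgebra.antipode (R := k) (S₂inv h) = h)
    (α₁ β₁ α₂ β₂ : H₁ ≃ₐc[k] H₁) (γ₁ δ₁ γ₂ δ₂ : H₂ ≃ₐc[k] H₂)
    (SM : YDLStruct k H₁ H₂ M) (SN : YDLStruct k H₁ H₂ N)
    (hM : IsYDL α₁.toLinearMap β₁.toLinearMap γ₁.toLinearMap δ₁.toLinearMap SM)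
    (hN : IsYDL α₂.toLinearMap β₂.toLinearMap γ₂.toLinearMap δ₂.toLinearMap SN) :
    braidInv (β₁.symm.toLinearMap ∘ₗ S₁inv) (δ₁.symm.toLinearMap ∘ₗ S₂inv) SM SN ∘ₗ
        braid β₁.symm.toLinearMap δ₁.symm.toLinearMap SM SN =
      LinearMap.id ∧
    braid β₁.symm.toLinearMap δ₁.symm.toLinearMap SM SN ∘ₗ
        braidInv (β₁.symm.toLinearMap ∘ₗ S₁inv) (δ₁.symm.toLinearMap ∘ₗ S₂inv) SM SN =
      LinearMap.id := by
  constructor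
  · exact braidInv_comp_braid β₁.symm.toLinearMap (β₁.symm.toLinearMap ∘ₗ S₁inv)
      δ₁.symm.toLinearMap (δ₁.symm.toLinearMap ∘ₗ S₂inv) SM SN
      hN.longL hM.longR hM.coL_coassoc hN.coR_coassoc hN.actL_mul hN.actL_one
      hM.actR_mul hM.actR_one hM.coL_counit hN.coR_counit
      (qgen2 S₁inv β₁.toLinearMap β₁.symm.toLinearMap hS₁ hS₁'
        (fun x => β₁.symm_apply_apply x)
        (fun x => β₁.apply_symm_apply x)
        (fun x y => map_mul β₁ x y) (map_one β₁)
        (fun a => by simpa using LinearMap.congr_fun (CoalgHomClass.map_comp_comul β₁) a)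
        (fun a => by simpa using LinearMap.congr_fun (CoalgHomClass.counit_comp β₁) a))
      (qgen1 S₂inv δ₁.toLinearMap δ₁.symm.toLinearMap hS₂ hS₂'
        (fun x => δ₁.symm_apply_apply x)
        (fun x => δ₁.apply_symm_apply x)
        (fun x y => map_mul δ₁ x y) (map_one δ₁)
        (fun a => by simpa using LinearMap.congr_fun (CoalgHomClass.map_comp_comul δ₁) a)
        (fun a => by simpa using LinearMap.congr_fun (CoalgHomClass.counit_comp δ₁) a))
  · exact braid_comp_braidInv β₁.symm.toLinearMap (β₁.symm.toLinearMap ∘ₗ S₁inv)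
      δ₁.symm.toLinearMap (δ₁.symm.toLinearMap ∘ₗ S₂inv) SM SN
      hN.longL hM.longR hM.coL_coassoc hN.coR_coassoc hN.actL_mul hN.actL_one
      hM.actR_mul hM.actR_one hM.coL_counit hN.coR_counit
      (qgen1 S₁inv β₁.toLinearMap β₁.symm.toLinearMap hS₁ hS₁'
        (fun x => β₁.symm_apply_apply x)
        (fun x => β₁.apply_symm_apply x)
        (fun x y => map_mul β₁ x y) (map_one β₁)
        (fun a => by simpa using LinearMap.congr_fun (CoalgHomClass.map_comp_comul β₁) a)
        (fun a => by simpa using LinearMap.congr_fun (CoalgHomClass.counit_comp β₁) a))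
      (qgen2 S₂inv δ₁.toLinearMap δ₁.symm.toLinearMap hS₂ hS₂'
        (fun x => δ₁.symm_apply_apply x)
        (fun x => δ₁.apply_symm_apply x)
        (fun x y => map_mul δ₁ x y) (map_one δ₁)
        (fun a => by simpa using LinearMap.congr_fun (CoalgHomClass.map_comp_comul δ₁) a)
        (fun a => by simpa using LinearMap.congr_fun (CoalgHomClass.counit_comp δ₁) a))
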